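/- Let N ≥ 2, k ≥ 2 even, a_k > 0, and let (r(t), p(t)) ∈ ℝ^{N-1} × ℝ^N be a C¹ solution on [0,τ] (τ > 0) of: r_i' = p_{i+1} - p_i, p_1' = k a_k |r_1|^{k-1} sign(r_1) - (1/2)𝟙_{k=2} p_1, p_N' = -k a_k |r_{N-1}|^{k-1} sign(r_{N-1}) - (1/2)𝟙_{k=2} p_N, p_i' = k a_k (|r_i|^{k-1} sign(r_i) - |r_{i-1}|^{k-1} sign(r_{i-1})) for 2 ≤ i ≤ N-1. If ∑_i (1/2)p_i(0)² + ∑_i a_k |r_i(0)|^k = 1, then ∫_0^τ (p_1(s)² + p_N(s)²) ds > 0. -/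
import Mathlib

private lemma deriv_zero_of_zero_on {g : ℝ → ℝ} {d t τ : ℝ} (hτ : 0 < τ)
    (ht : t ∈ Set.Icc 0 τ) (hg : ∀ s ∈ Set.Icc 0 τ, g s = 0)
    (hd : HasDerivAt g d t) : d = 0 := by
  have hu : UniqueDiffOn ℝ (Set.Icc (0:ℝ) τ) := uniqueDiffOn_Icc hτ
  have h1 : HasDerivWithinAt g d (Set.Icc 0 τ) t := hd.hasDerivWithinAt
  have h2 : HasDerivWithinAt g 0 (Set.Icc 0 τ) t :=
    (hasDerivWithinAt_const t _ (0:ℝ)).congr (fun s hs => hg s hs) (hg t ht)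
  have e1 := h1.derivWithin (hu t ht)
  have e2 := h2.derivWithin (hu t ht)
  rw [← e1, e2]

/-- non-degeneracy of the limiting deterministic unpinned chain in
interdistance coordinates: if the initial energy is 1, the boundary momenta cannot
vanish identically on `[0,τ]`. -/
theorem stmt2 (N k : ℕ) (hN : 2 ≤ N) (hk : 2 ≤ k) (hkeven : Even k)
    (a τ : ℝ) (ha : 0 < a) (hτ : 0 < τ)
    (r p : ℕ → ℝ → ℝ)
    (φ : ℝ → ℝ)
    (hφ : ∀ x, φ x = k * a * |x| ^ (k - 1) * Real.sign x)
    (hr : ∀ i ∈ Finset.Icc 1 (N - 1), ∀ t ∈ Set.Icc 0 τ,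
      HasDerivAt (r i) (p (i + 1) t - p i t) t)
    (hp1 : ∀ t ∈ Set.Icc 0 τ,
      HasDerivAt (p 1) (φ (r 1 t) - (if k = 2 then (1/2) * p 1 t else 0)) t)
    (hpN : ∀ t ∈ Set.Icc 0 τ,
      HasDerivAt (p N) (-φ (r (N - 1) t) - (if k = 2 then (1/2) * p N t else 0)) t)
    (hpi : ∀ i, 2 ≤ i → i ≤ N - 1 → ∀ t ∈ Set.Icc 0 τ,
      HasDerivAt (p i) (φ (r i t) - φ (r (i - 1) t)) t)
    (hH : (∑ i ∈ Finset.Icc 1 N, (1/2) * (p i 0) ^ 2)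
        + ∑ i ∈ Finset.Icc 1 (N - 1), a * |r i 0| ^ k = 1) :
    0 < ∫ s in (0:ℝ)..τ, ((p 1 s) ^ 2 + (p N s) ^ 2) := by
  by_contra hcon
  push_neg at hcon
  have hτle : (0:ℝ) ≤ τ := hτ.le
  -- φ properties
  have hφ0 : φ 0 = 0 := by simp [hφ, Real.sign_zero]
  have hφinj : ∀ x : ℝ, φ x = 0 → x = 0 := by
    intro x hx
    by_contra hx0
    have h1 : (k : ℝ) ≠ 0 := by positivity
    have h2 : (a : ℝ) ≠ 0 := ne_of_gt ha
    have h3 : |x| ^ (k - 1) ≠ 0 := pow_ne_zero _ (abs_ne_zero.2 hx0)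
    have h4 : Real.sign x ≠ 0 := fun h => hx0 (Real.sign_eq_zero_iff.mp h)
    have := mul_ne_zero (mul_ne_zero (mul_ne_zero h1 h2) h3) h4
    rw [hφ x] at hx
    exact this hx
  -- continuity
  have hc1 : ContinuousOn (p 1) (Set.Icc 0 τ) :=
    fun t ht => ((hp1 t ht).continuousAt).continuousWithinAt
  have hcN : ContinuousOn (p N) (Set.Icc 0 τ) :=
    fun t ht => ((hpN t ht).continuousAt).continuousWithinAt
  set f : ℝ → ℝ := fun s => (p 1 s) ^ 2 + (p N s) ^ 2 with hf
  have hcf : ContinuousOn f (Set.Icc 0 τ) :=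
    ((hc1.pow 2).add (hcN.pow 2))
  have hfi : IntervalIntegrable f MeasureTheory.volume 0 τ := by
    apply ContinuousOn.intervalIntegrable
    rwa [Set.uIcc_of_le hτle]
  have hnn : ∀ s, 0 ≤ f s := fun s => by positivity
  have hz : ∫ s in (0:ℝ)..τ, f s = 0 :=
    le_antisymm hcon (intervalIntegral.integral_nonneg hτle fun s _ => hnn s)
  have hae : f =ᵐ[MeasureTheory.volume.restrict (Set.Ioc 0 τ)] 0 := by
    rw [← intervalIntegral.integral_eq_zero_iff_of_le_of_nonneg_ae hτle
      (Filter.Eventually.of_forall fun s => hnn s) hfi]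
    exact hz
  have haeIcc : f =ᵐ[MeasureTheory.volume.restrict (Set.Icc 0 τ)] 0 := by
    rwa [MeasureTheory.Measure.restrict_congr_set MeasureTheory.Ioc_ae_eq_Icc] at hae
  have hfzero : Set.EqOn f 0 (Set.Icc 0 τ) := by
    apply MeasureTheory.Measure.eqOn_of_ae_eq haeIcc hcf continuousOn_const
    rw [interior_Icc, closure_Ioo (ne_of_lt hτ)]
  have hp1z : ∀ t ∈ Set.Icc 0 τ, p 1 t = 0 := by
    intro t ht
    have := hfzero ht
    simp only [hf, Pi.zero_apply] at this
    nlinarith [sq_nonneg (p 1 t), sq_nonneg (p N t)]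
  -- the induction
  have key : ∀ j : ℕ, j ≤ N - 1 →
      (∀ t ∈ Set.Icc 0 τ, p (j + 1) t = 0) ∧
      (1 ≤ j → ∀ t ∈ Set.Icc 0 τ, r j t = 0) := by
    intro j
    induction j with
    | zero => exact fun _ => ⟨hp1z, fun h => absurd h (by norm_num)⟩
    | succ j ih =>
      intro hjN
      have hj' : j ≤ N - 1 := Nat.le_of_succ_le hjN
      obtain ⟨hpj, _⟩ := ih hj'
      -- first r (j+1) ≡ 0 using p (j+1) ≡ 0 and the p-equation for index j+1
      have hrj1 : ∀ t ∈ Set.Icc 0 τ, r (j + 1) t = 0 := by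
        intro t ht
        rcases Nat.eq_zero_or_pos j with hj0 | hjpos
        · subst hj0
          have hd := hp1 t ht
          have hval : φ (r 1 t) - (if k = 2 then (1/2) * p 1 t else 0) = 0 :=
            deriv_zero_of_zero_on hτ ht hp1z hd
          have : (if k = 2 then (1/2) * p 1 t else 0) = 0 := by
            split_ifs <;> simp [hp1z t ht]
          rw [this, sub_zero] at hval
          exact hφinj _ hval
        · obtain ⟨_, hrj⟩ := ih hj'
          have h2j : 2 ≤ j + 1 := by omega
          have hd := hpi (j + 1) h2j hjN t ht
          have hval : φ (r (j + 1) t) - φ (r (j + 1 - 1) t) = 0 :=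
            deriv_zero_of_zero_on hτ ht hpj hd
          have hrjt : r (j + 1 - 1) t = 0 := by
            simpa using hrj hjpos t ht
          rw [hrjt, hφ0, sub_zero] at hval
          exact hφinj _ hval
      refine ⟨?_, fun _ => hrj1⟩
      intro t ht
      have hmem : j + 1 ∈ Finset.Icc 1 (N - 1) := by
        simp only [Finset.mem_Icc]; omega
      have hd := hr (j + 1) hmem t ht
      have hval : p (j + 1 + 1) t - p (j + 1) t = 0 :=
        deriv_zero_of_zero_on hτ ht hrj1 hd
      have := hpj t ht
      linarith
  -- evaluate energy at 0
  have h0 : (0:ℝ) ∈ Set.Icc (0:ℝ) τ := ⟨le_refl _, hτle⟩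
  have hpall : ∀ i ∈ Finset.Icc 1 N, p i 0 = 0 := by
    intro i hi
    rw [Finset.mem_Icc] at hi
    obtain ⟨h1, h2⟩ := hi
    obtain ⟨j, rfl⟩ : ∃ j, i = j + 1 := ⟨i - 1, by omega⟩
    exact (key j (by omega)).1 0 h0
  have hrall : ∀ i ∈ Finset.Icc 1 (N - 1), r i 0 = 0 := by
    intro i hi
    rw [Finset.mem_Icc] at hi
    exact (key i hi.2).2 hi.1 0 h0
  have hk0 : k ≠ 0 := by omega
  have hs1 : (∑ i ∈ Finset.Icc 1 N, (1/2) * (p i 0) ^ 2) = 0 :=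
    Finset.sum_eq_zero (fun i hi => by rw [hpall i hi]; ring)
  have hs2 : (∑ i ∈ Finset.Icc 1 (N - 1), a * |r i 0| ^ k) = 0 :=
    Finset.sum_eq_zero (fun i hi => by rw [hrall i hi]; simp [hk0])
  rw [hs1, hs2] at hH
  norm_num at hH
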